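/- Let P be a uniquely generated finite poset with cover graph G. Color the vertices greedily in the order of a linear extension: each vertex v receives the smallest positive integer not used on the set C(v) of elements covered by v. Then for every vertex v receiving color k, the down-set T(v) = {u : u ≤ v} has at least 2^{k-1} elements. -/

import Mathlib

/-- A poset is uniquely generated if every comparable pair `x < y` is connected
by a unique covering chain. -/
def UniquelyGenerated (α : Type*) [PartialOrder α] : Prop :=
  ∀ x y : α, x < y →
    ∃! l : List α, List.Chain (· ⋖ ·) x l ∧ l.getLast? = some y

/-- `c` is the greedy coloring of the cover graph along a linear extension:
each vertex `v` gets the least positive integer not used on the set of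
elements covered by `v` (these are exactly the already-colored neighbours that
matter, and this fixpoint property characterizes the greedy coloring along any
linear extension). -/
def IsGreedyColoring (α : Type*) [PartialOrder α] (c : α → ℕ) : Prop :=
  ∀ v : α, c v = sInf {k : ℕ | 1 ≤ k ∧ ∀ u : α, u ⋖ v → c u ≠ k}

section Aux

variable {α : Type*} [PartialOrder α]

/-- If `w ≤ u`, there is a covering chain from `w` ending at `u`. -/
lemma exists_chain_of_le (hug : UniquelyGenerated α) {w u : α} (hwu : w ≤ u) :
    ∃ L : List α, List.Chain (· ⋖ ·) w L ∧ (w :: L).getLast? = some u := by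
  rcases hwu.lt_or_eq with h | rfl
  · obtain ⟨L, ⟨hL, hlast⟩, -⟩ := hug w u h
    refine ⟨L, hL, ?_⟩
    cases L with
    | nil => simp at hlast
    | cons a l => simpa using hlast
  · exact ⟨[], List.Chain.nil, rfl⟩

/-- In a uniquely generated poset, any element below two elements covered by `v`
forces those two covered elements to coincide. -/
lemma covers_eq_of_le (hug : UniquelyGenerated α) {w u u' v : α}
    (hu : u ⋖ v) (hu' : u' ⋖ v) (hw : w ≤ u) (hw' : w ≤ u') : u = u' := by
  obtain ⟨L, hL, hlast⟩ := exists_chain_of_le hug hw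
  obtain ⟨L', hL', hlast'⟩ := exists_chain_of_le hug hw'
  have hwv : w < v := lt_of_le_of_lt hw hu.lt
  have key : ∀ (L₀ : List α) (u₀ : α), u₀ ⋖ v → List.Chain (· ⋖ ·) w L₀ →
      (w :: L₀).getLast? = some u₀ →
      List.Chain (· ⋖ ·) w (L₀ ++ [v]) ∧ (L₀ ++ [v]).getLast? = some v := by
    intro L₀ u₀ hu₀ hch hlast₀
    constructor
    · have hch' : List.Chain' (· ⋖ ·) (w :: L₀) := hch
      have : List.Chain' (· ⋖ ·) ((w :: L₀) ++ [v]) := by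
        apply List.IsChain.append hch' (List.isChain_singleton v)
        intro x hx y hy
        simp only [List.head?_cons, Option.mem_def] at hy
        rw [hlast₀] at hx
        simp only [Option.mem_def, Option.some.injEq] at hx
        subst hx
        cases hy
        exact hu₀
      exact this
    · simp
  obtain ⟨h₁, h₂⟩ := key L u hu hL hlast
  obtain ⟨h₁', h₂'⟩ := key L' u' hu' hL' hlast'
  obtain ⟨m, -, hm⟩ := hug w v hwv
  have e1 : L ++ [v] = m := hm _ ⟨h₁, h₂⟩
  have e2 : L' ++ [v] = m := hm _ ⟨h₁', h₂'⟩
  have : L = L' := List.append_cancel_right (e1.trans e2.symm)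
  subst this
  have : some u = some u' := hlast ▸ hlast'
  exact Option.some.inj this.symm |>.symm

end Aux

/-- In the greedy coloring of the cover graph of a uniquely generated finite
poset, if `v` receives color `k` then the down-set `T(v) = {u : u ≤ v}` has at
least `2^(k-1)` elements. -/
theorem stmt1 (α : Type*) [Fintype α] [PartialOrder α]
    (hug : UniquelyGenerated α) (c : α → ℕ) (hc : IsGreedyColoring α c)
    (v : α) (k : ℕ) (hk : c v = k) :
    2 ^ (k - 1) ≤ Set.ncard {u : α | u ≤ v} := by
  classical
  subst hk
  have main : ∀ v : α, 2 ^ (c v - 1) ≤ (Finset.univ.filter (· ≤ v)).card := by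
    intro v
    induction v using WellFoundedLT.induction with
    | _ v IH =>
    set S : Set ℕ := {k : ℕ | 1 ≤ k ∧ ∀ u : α, u ⋖ v → c u ≠ k} with hS
    have hSne : S.Nonempty := by
      refine ⟨Finset.univ.sup c + 1, ?_, ?_⟩
      · omega
      · intro u _
        have := Finset.le_sup (f := c) (Finset.mem_univ u)
        omega
    have hmem : c v ∈ S := by rw [hc v]; exact Nat.sInf_mem hSne
    have hpos : 1 ≤ c v := hmem.1
    set n := c v - 1 with hn
    -- for every color j+1 < c v there is a covered element with that color
    have hcol : ∀ j : ℕ, j < n → ∃ u : α, u ⋖ v ∧ c u = j + 1 := by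
      intro j hj
      have hlt : j + 1 < sInf S := by rw [← hc v]; omega
      have := Nat.notMem_of_lt_sInf hlt
      simp only [hS, Set.mem_setOf_eq, not_and, not_forall] at this
      obtain ⟨u, hu, hcu⟩ := this (by omega)
      exact ⟨u, hu, by push_neg at hcu; exact hcu⟩
    choose f hfcov hfc using hcol
    -- the down-sets of the chosen covered elements are pairwise disjoint
    have hdisj : (↑(Finset.range n) : Set ℕ).PairwiseDisjoint
        (fun j => if h : j < n then Finset.univ.filter (· ≤ f j h) else ∅) := by
      intro i hi j hj hij
      simp only [Finset.coe_range, Set.mem_Iio] at hi hj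
      simp only [Function.onFun]
      rw [Finset.disjoint_left]
      intro w hwi hwj
      simp only [hi, hj, dif_pos, Finset.mem_filter] at hwi hwj
      exact hij (by
        have := covers_eq_of_le hug (hfcov i hi) (hfcov j hj) hwi.2 hwj.2
        have : c (f i hi) = c (f j hj) := by rw [this]
        rw [hfc i hi, hfc j hj] at this
        omega)
    set U : Finset α := (Finset.range n).biUnion
        (fun j => if h : j < n then Finset.univ.filter (· ≤ f j h) else ∅) with hU
    have hcardU : (2 ^ n - 1) ≤ U.card := by
      rw [hU, Finset.card_biUnion (fun i hi j hj hij => hdisj (by simpa using hi) (by simpa using hj) hij)]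
      have : ∀ j ∈ Finset.range n, 2 ^ j ≤
          (if h : j < n then Finset.univ.filter (· ≤ f j h) else ∅).card := by
        intro j hj
        have hj' : j < n := Finset.mem_range.mp hj
        rw [dif_pos hj']
        have hlt : f j hj' < v := (hfcov j hj').lt
        have := IH _ hlt
        rwa [hfc j hj', Nat.add_sub_cancel] at this
      calc 2 ^ n - 1 = ∑ j ∈ Finset.range n, 2 ^ j := by
            induction n with
            | zero => simp
            | succ m ih => rw [Finset.sum_range_succ, ← ih]; have := Nat.one_le_two_pow (n := m); omega
        _ ≤ _ := Finset.sum_le_sum this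
    have hvU : v ∉ U := by
      intro hv
      simp only [hU, Finset.mem_biUnion] at hv
      obtain ⟨j, hj, hv⟩ := hv
      have hj' := Finset.mem_range.mp hj
      rw [dif_pos hj'] at hv
      simp only [Finset.mem_filter] at hv
      exact absurd hv.2 (not_le_of_gt (hfcov j hj').lt)
    have hsub : insert v U ⊆ Finset.univ.filter (· ≤ v) := by
      intro w hw
      rcases Finset.mem_insert.mp hw with rfl | hw
      · simp
      · simp only [hU, Finset.mem_biUnion] at hw
        obtain ⟨j, hj, hw⟩ := hw
        have hj' := Finset.mem_range.mp hj
        rw [dif_pos hj'] at hw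
        simp only [Finset.mem_filter] at hw ⊢
        exact ⟨Finset.mem_univ _, hw.2.trans (hfcov j hj').lt.le⟩
    have : 2 ^ n ≤ (insert v U).card := by
      rw [Finset.card_insert_of_notMem hvU]
      have := Nat.one_le_two_pow (n := n)
      omega
    calc 2 ^ (c v - 1) = 2 ^ n := rfl
      _ ≤ (insert v U).card := this
      _ ≤ _ := Finset.card_le_card hsub
  have := main v
  have hset : {u : α | u ≤ v} = ↑(Finset.univ.filter (· ≤ v)) := by
    ext u; simp
  rw [hset, Set.ncard_coe_finset]
  exact this
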